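/- If P is a strictly positive vector in X_A with support F = {1,...,m} restricted to where P > 0, then the system of linear equations ∑_{i=1}^d a_{ij} τ_i = log(p_j) for j ∈ F has a real solution (τ_1,...,τ_d). Equivalently, the system ∏_{i=1}^d t_i^{a_{ij}} = p_j (j ∈ F) has a solution with all t_i > 0. -/

import Mathlib

/-- If `P ∈ X_A` has support `F`, then the linear system
`∑ᵢ a_{ij} τᵢ = log pⱼ` (for `j ∈ F`) has a real solution; equivalently
`∏ᵢ tᵢ^{a_{ij}} = pⱼ` (for `j ∈ F`) has a solution with all `tᵢ > 0`. -/
theorem toric_point_log_linear_solvable {d m : ℕ} (A : Matrix (Fin d) (Fin m) ℕ)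
    (P : Fin m → ℝ) (hP : ∀ j, 0 ≤ P j)
    (hX : ∀ u v : Fin m → ℕ, (∀ i, ∑ j, A i j * u j = ∑ j, A i j * v j) →
      ∏ j, P j ^ u j = ∏ j, P j ^ v j) :
    (∃ τ : Fin d → ℝ, ∀ j, P j ≠ 0 → ∑ i, (A i j : ℝ) * τ i = Real.log (P j)) ∧
      (∃ t : Fin d → ℝ, (∀ i, 0 < t i) ∧ ∀ j, P j ≠ 0 → ∏ i, t i ^ A i j = P j) := by
  classical
  -- the rational-coefficient linear functional `c ↦ ∑ c_j log p_j`
  let L : (Fin m → ℚ) →ₗ[ℚ] ℝ :=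
    ∑ j, (LinearMap.toSpanSingleton ℚ ℝ (Real.log (P j))).comp (LinearMap.proj j)
  have hLapp : ∀ c : Fin m → ℚ, L c = ∑ j, (c j : ℝ) * Real.log (P j) := by
    intro c
    simp [L, LinearMap.sum_apply, LinearMap.toSpanSingleton_apply, Rat.smul_def]
  -- the rational-coefficient linear map encoding the constraints
  let S : (Fin m → ℚ) →ₗ[ℚ] ((Fin d → ℚ) × (Fin m → ℚ)) :=
    (LinearMap.pi fun i => ∑ j, (A i j : ℚ) • (LinearMap.proj j)).prod
      (LinearMap.pi fun j => if P j = 0 then LinearMap.proj j else 0)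
  have hSapp : ∀ c : Fin m → ℚ, S c =
      (fun i => ∑ j, (A i j : ℚ) * c j, fun j => if P j = 0 then c j else 0) := by
    intro c
    refine Prod.ext (funext fun i => ?_) (funext fun j => ?_)
    · simp [S, LinearMap.pi_apply, LinearMap.sum_apply, smul_eq_mul]
    · simp only [S, LinearMap.prod_apply, Pi.prod, LinearMap.pi_apply]
      by_cases h : P j = 0 <;> simp [h]
  -- key step: `L` kills the kernel of `S`
  have hker : LinearMap.ker S ≤ LinearMap.ker L := by
    intro c hc
    rw [LinearMap.mem_ker] at hc
    have hc' : ((fun i => ∑ j, (A i j : ℚ) * c j, fun j => if P j = 0 then c j else 0) :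
        (Fin d → ℚ) × (Fin m → ℚ)) = 0 := (hSapp c).symm.trans hc
    have h1 : ∀ i, ∑ j, (A i j : ℚ) * c j = 0 := by
      intro i
      exact congrFun (congrArg Prod.fst hc') i
    have h2 : ∀ j, P j = 0 → c j = 0 := by
      intro j hj
      have := congrFun (congrArg Prod.snd hc') j
      simpa [hj] using this
    set N : ℕ := ∏ j, (c j).den with hNdef
    have hN : 0 < N := Finset.prod_pos fun j _ => (c j).pos
    have hz : ∀ j : Fin m, ∃ z : ℤ, (z : ℚ) = (N : ℚ) * c j := by
      intro j
      obtain ⟨k, hk⟩ : ((c j).den : ℤ) ∣ (N : ℤ) := by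
        exact_mod_cast Finset.dvd_prod_of_mem (fun j => (c j).den) (Finset.mem_univ j)
      refine ⟨k * (c j).num, ?_⟩
      have hden : ((c j).den : ℚ) ≠ 0 := by exact_mod_cast (c j).den_nz
      have hk' : (N : ℚ) = ((c j).den : ℚ) * k := by exact_mod_cast hk
      have hnum : ((c j).num : ℚ) = c j * ((c j).den : ℚ) :=
        (div_eq_iff hden).mp (Rat.num_div_den (c j))
      push_cast
      rw [hnum, hk']
      ring
    choose z hzz using hz
    set u : Fin m → ℕ := fun j => (z j).toNat with hu
    set v : Fin m → ℕ := fun j => (-(z j)).toNat with hv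
    have huv : ∀ j, (u j : ℤ) - (v j : ℤ) = z j := fun j => Int.toNat_sub_toNat_neg (z j)
    have hA : ∀ i, ∑ j, A i j * u j = ∑ j, A i j * v j := by
      intro i
      have hq : ∑ j, (A i j : ℚ) * (z j : ℚ) = 0 := by
        have : ∑ j, (A i j : ℚ) * (z j : ℚ) = (N : ℚ) * ∑ j, (A i j : ℚ) * c j := by
          rw [Finset.mul_sum]
          exact Finset.sum_congr rfl fun j _ => by rw [hzz j]; ring
        rw [this, h1 i, mul_zero]
      have hzsum : ∑ j, (A i j : ℤ) * z j = 0 := by exact_mod_cast hq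
      have hsub : (∑ j, (A i j : ℤ) * (u j : ℤ)) - ∑ j, (A i j : ℤ) * (v j : ℤ) = 0 := by
        rw [← Finset.sum_sub_distrib, ← hzsum]
        refine Finset.sum_congr rfl fun j _ => ?_
        rw [← huv j]; ring
      have : (∑ j, (A i j : ℤ) * (u j : ℤ)) = ∑ j, (A i j : ℤ) * (v j : ℤ) :=
        sub_eq_zero.mp hsub
      exact_mod_cast this
    have hzero : ∀ j, P j = 0 → z j = 0 := by
      intro j hj
      have : (z j : ℚ) = 0 := by rw [hzz j, h2 j hj, mul_zero]
      exact_mod_cast this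
    have hposu : ∀ j, 0 < P j ^ u j := by
      intro j
      by_cases hj : P j = 0
      · have : u j = 0 := by simp [hu, hzero j hj]
        simp [this]
      · exact pow_pos (lt_of_le_of_ne (hP j) (Ne.symm hj)) _
    have hposv : ∀ j, 0 < P j ^ v j := by
      intro j
      by_cases hj : P j = 0
      · have : v j = 0 := by simp [hv, hzero j hj]
        simp [this]
      · exact pow_pos (lt_of_le_of_ne (hP j) (Ne.symm hj)) _
    have hprod := hX u v hA
    have hlog : ∑ j, (u j : ℝ) * Real.log (P j) = ∑ j, (v j : ℝ) * Real.log (P j) := by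
      have hl := congrArg Real.log hprod
      rw [Real.log_prod (fun j _ => (hposu j).ne'),
        Real.log_prod (fun j _ => (hposv j).ne')] at hl
      simpa [Real.log_pow] using hl
    rw [LinearMap.mem_ker, hLapp]
    have hNsum : (N : ℝ) * ∑ j, (c j : ℝ) * Real.log (P j) = 0 := by
      rw [Finset.mul_sum]
      have key : ∀ j, (N : ℝ) * ((c j : ℝ) * Real.log (P j))
          = ((u j : ℝ) - (v j : ℝ)) * Real.log (P j) := by
        intro j
        have hz' : (z j : ℝ) = (N : ℝ) * (c j : ℝ) := by exact_mod_cast hzz j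
        have hu' : ((u j : ℝ) - (v j : ℝ)) = (z j : ℝ) := by exact_mod_cast huv j
        rw [hu', hz']; ring
      rw [Finset.sum_congr rfl fun j _ => key j]
      simp only [sub_mul, Finset.sum_sub_distrib]
      rw [sub_eq_zero]
      exact hlog
    have hNne : (N : ℝ) ≠ 0 := by positivity
    exact (mul_eq_zero.mp hNsum).resolve_left hNne
  -- extend the induced functional on the range of `S` to the whole space
  let φ : ((Fin m → ℚ) ⧸ LinearMap.ker S) →ₗ[ℚ] ℝ := (LinearMap.ker S).liftQ L hker
  let ψ : (LinearMap.range S : Submodule ℚ _) →ₗ[ℚ] ℝ :=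
    φ.comp S.quotKerEquivRange.symm.toLinearMap
  obtain ⟨g, hg⟩ := LinearMap.exists_extend ψ
  have hgS : ∀ c, g (S c) = L c := by
    intro c
    have hmem : S c ∈ LinearMap.range S := LinearMap.mem_range_self S c
    have h1 : g (S c) = ψ ⟨S c, hmem⟩ := LinearMap.ext_iff.mp hg ⟨S c, hmem⟩
    rw [h1]
    show φ (S.quotKerEquivRange.symm ⟨S c, hmem⟩) = L c
    rw [LinearMap.quotKerEquivRange_symm_apply_image]
    exact Submodule.liftQ_apply _ L c
  -- the solution
  set τ : Fin d → ℝ := fun i => g (Pi.single i 1, 0) with hτ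
  have main : ∀ j, P j ≠ 0 → ∑ i, (A i j : ℝ) * τ i = Real.log (P j) := by
    intro j hj
    have e1 : S (Pi.single j 1) = (fun i => (A i j : ℚ), 0) := by
      rw [hSapp]
      refine Prod.ext (funext fun i => ?_) (funext fun j' => ?_)
      · simp [Pi.single_apply, mul_ite, Finset.sum_ite_eq]
      · rcases eq_or_ne j' j with rfl | hne
        · simp [hj]
        · simp [Pi.single_apply, hne]
    have e2 : ((fun i => (A i j : ℚ)), (0 : Fin m → ℚ))
        = ∑ i, (A i j : ℚ) • ((Pi.single i 1 : Fin d → ℚ), (0 : Fin m → ℚ)) := by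
      refine Prod.ext ?_ ?_
      · rw [Prod.fst_sum]
        funext i'
        simp [Finset.sum_apply, Pi.single_apply, mul_ite, Finset.sum_ite_eq']
      · rw [Prod.snd_sum]
        simp
    calc ∑ i, (A i j : ℝ) * τ i
        = ∑ i, g ((A i j : ℚ) • ((Pi.single i 1 : Fin d → ℚ), (0 : Fin m → ℚ))) := by
          refine Finset.sum_congr rfl fun i _ => ?_
          rw [map_smul, Rat.smul_def]
          norm_cast
      _ = g (∑ i, (A i j : ℚ) • ((Pi.single i 1 : Fin d → ℚ), (0 : Fin m → ℚ))) :=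
          (map_sum g _ _).symm
      _ = g (S (Pi.single j 1)) := by rw [e1, e2]
      _ = L (Pi.single j 1) := hgS _
      _ = Real.log (P j) := by
          rw [hLapp]
          simp [Pi.single_apply, apply_ite (fun q : ℚ => (q : ℝ)), ite_mul,
            Finset.sum_ite_eq]
  refine ⟨⟨τ, main⟩, ⟨fun i => Real.exp (τ i), fun i => Real.exp_pos _, ?_⟩⟩
  intro j hj
  have hpos : 0 < P j := lt_of_le_of_ne (hP j) (Ne.symm hj)
  calc ∏ i, Real.exp (τ i) ^ A i j
      = ∏ i, Real.exp ((A i j : ℝ) * τ i) := by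
        refine Finset.prod_congr rfl fun i _ => ?_
        rw [← Real.exp_nat_mul]
    _ = Real.exp (∑ i, (A i j : ℝ) * τ i) := (Real.exp_sum _ _).symm
    _ = Real.exp (Real.log (P j)) := by rw [main j hj]
    _ = P j := Real.exp_log hpos
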